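/- arXiv:1509.05539 — 3 statements merged into one kernel-verified Lean document; each statement's English description precedes it below -/
import Mathlib

section
/- For every natural number n and every 2-coloring (red/blue) of the edges of the complete graph K_n, the vertex set of K_n can be partitioned into the vertex set of a red path and the vertex set of a blue path. -/
open Finset

def IsMonoPath {V : Type*} {r : ℕ} (G : SimpleGraph V) (c : Sym2 V → Fin r) (i : Fin r)
    (l : List V) : Prop :=
  l.Nodup ∧ l.Chain' fun a b => G.Adj a b ∧ c s(a, b) = i

lemma fin2_cases (x : Fin 2) : x = 0 ∨ x = 1 := by omega

lemma aux {V : Type*} (c : Sym2 V → Fin 2) (s : List V) (hs : s.Nodup) :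
    ∃ lr lb : List V, IsMonoPath (⊤ : SimpleGraph V) c 0 lr ∧
      IsMonoPath (⊤ : SimpleGraph V) c 1 lb ∧ lr.Disjoint lb ∧
      ∀ v, v ∈ s ↔ (v ∈ lr ∨ v ∈ lb) := by
  induction s with
  | nil => exact ⟨[], [], ⟨List.nodup_nil, List.isChain_nil⟩, ⟨List.nodup_nil, List.isChain_nil⟩,
      by simp [List.Disjoint], by simp⟩
  | cons v t ih =>
    obtain ⟨hvt, htn⟩ := List.nodup_cons.mp hs
    obtain ⟨lr, lb, ⟨hrn, hrc⟩, ⟨hbn, hbc⟩, hdisj, hmem⟩ := ih htn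
    have hvr : v ∉ lr := fun h => hvt ((hmem v).mpr (Or.inl h))
    have hvb : v ∉ lb := fun h => hvt ((hmem v).mpr (Or.inr h))
    have cov : ∀ {LR LB : List V},
        (∀ w, (w ∈ LR ∨ w ∈ LB) ↔ (w = v ∨ (w ∈ lr ∨ w ∈ lb))) →
        ∀ w, w ∈ v :: t ↔ (w ∈ LR ∨ w ∈ LB) := by
      intro LR LB h w
      rw [List.mem_cons, h w, hmem w]
    match lr, lb with
    | [], lb =>
      refine ⟨[v], lb, ⟨by simp, List.isChain_singleton v⟩, ⟨hbn, hbc⟩, ?_, cov ?_⟩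
      · intro x hx; simp at hx; subst hx; exact hvb
      · intro w; simp only [List.mem_singleton, List.not_mem_nil, false_or]
    | lr, [] =>
      refine ⟨lr, [v], ⟨hrn, hrc⟩, ⟨by simp, List.isChain_singleton v⟩, ?_, cov ?_⟩
      · intro x hx hx'; simp at hx'; subst hx'; exact hvr hx
      · intro w; simp only [List.mem_singleton, List.not_mem_nil, or_false]; tauto
    | a :: tr, b :: tb =>
      have hab : a ≠ b := fun h => hdisj ((List.mem_cons_self : a ∈ a :: tr)) (h ▸ (List.mem_cons_self : b ∈ b :: tb))
      have hva : v ≠ a := fun h => hvr (h ▸ (List.mem_cons_self : a ∈ a :: tr))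
      have hvb' : v ≠ b := fun h => hvb (h ▸ (List.mem_cons_self : b ∈ b :: tb))
      rcases fin2_cases (c s(v, a)) with h0 | h1
      · -- prepend v to red path
        refine ⟨v :: a :: tr, b :: tb, ⟨List.nodup_cons.mpr ⟨hvr, hrn⟩,
          List.isChain_cons_cons.mpr ⟨⟨by simpa using hva, h0⟩, hrc⟩⟩, ⟨hbn, hbc⟩, ?_, cov ?_⟩
        · intro x hx
          rcases List.mem_cons.mp hx with rfl | hx
          · exact hvb
          · exact hdisj hx
        · intro w; simp only [List.mem_cons]; tauto
      · rcases fin2_cases (c s(v, b)) with h0' | h1'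
        · rcases fin2_cases (c s(a, b)) with hab0 | hab1
          · -- a-b red: red path v :: b :: a :: tr, blue path tb
            have hbr : b ∉ a :: tr := fun h => hdisj h ((List.mem_cons_self : b ∈ b :: tb))
            have hnd : (v :: b :: a :: tr).Nodup := by
              refine List.nodup_cons.mpr ⟨?_, List.nodup_cons.mpr ⟨hbr, hrn⟩⟩
              simp only [List.mem_cons]; push_neg
              exact ⟨hvb', hva, fun h => hvr (List.mem_cons.mpr (Or.inr h))⟩
            refine ⟨v :: b :: a :: tr, tb, ⟨hnd,
              List.isChain_cons_cons.mpr ⟨⟨by simpa using hvb', h0'⟩,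
                List.isChain_cons_cons.mpr ⟨⟨by simpa using (Ne.symm hab), by rwa [Sym2.eq_swap]⟩,
                  hrc⟩⟩⟩,
              ⟨(List.nodup_cons.mp hbn).2, hbc.tail⟩, ?_, cov ?_⟩
            · intro x hx hx'
              rcases List.mem_cons.mp hx with rfl | hx
              · exact hvb (List.mem_cons.mpr (Or.inr hx'))
              rcases List.mem_cons.mp hx with rfl | hx
              · exact (List.nodup_cons.mp hbn).1 hx'
              · exact hdisj hx (List.mem_cons.mpr (Or.inr hx'))
            · intro w; simp only [List.mem_cons]; tauto
          · -- a-b blue: red path tr, blue path v :: a :: b :: tb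
            have hab' : a ∉ b :: tb := fun h => hdisj ((List.mem_cons_self : a ∈ a :: tr)) h
            have hnd : (v :: a :: b :: tb).Nodup := by
              refine List.nodup_cons.mpr ⟨?_, List.nodup_cons.mpr ⟨hab', hbn⟩⟩
              simp only [List.mem_cons]; push_neg
              exact ⟨hva, hvb', fun h => hvb (List.mem_cons.mpr (Or.inr h))⟩
            refine ⟨tr, v :: a :: b :: tb,
              ⟨(List.nodup_cons.mp hrn).2, hrc.tail⟩,
              ⟨hnd, List.isChain_cons_cons.mpr ⟨⟨by simpa using hva, h1⟩,
                List.isChain_cons_cons.mpr ⟨⟨by simpa using hab, hab1⟩, hbc⟩⟩⟩, ?_, cov ?_⟩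
            · intro x hx hx'
              rcases List.mem_cons.mp hx' with rfl | hx'
              · exact hvr (List.mem_cons.mpr (Or.inr hx))
              rcases List.mem_cons.mp hx' with rfl | hx'
              · exact (List.nodup_cons.mp hrn).1 hx
              · exact hdisj (List.mem_cons.mpr (Or.inr hx)) hx'
            · intro w; simp only [List.mem_cons]; tauto
        · -- prepend v to blue path
          refine ⟨a :: tr, v :: b :: tb, ⟨hrn, hrc⟩, ⟨List.nodup_cons.mpr ⟨hvb, hbn⟩,
            List.isChain_cons_cons.mpr ⟨⟨by simpa using hvb', h1'⟩, hbc⟩⟩, ?_, cov ?_⟩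
          · intro x hx hx'
            rcases List.mem_cons.mp hx' with rfl | hx'
            · exact hvr hx
            · exact hdisj hx hx'
          · intro w; simp only [List.mem_cons]; tauto

/-- The vertex set of every 2-colored complete graph `K_n` can be partitioned into
the vertex set of a red path and the vertex set of a blue path. -/
theorem stmt_0 (n : ℕ) (c : Sym2 (Fin n) → Fin 2) :
    ∃ lr lb : List (Fin n),
      IsMonoPath (⊤ : SimpleGraph (Fin n)) c 0 lr ∧
      IsMonoPath (⊤ : SimpleGraph (Fin n)) c 1 lb ∧
      lr.Disjoint lb ∧
      ∀ v : Fin n, v ∈ lr ∨ v ∈ lb := by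
  obtain ⟨lr, lb, h1, h2, h3, h4⟩ := aux c (List.finRange n) (List.nodup_finRange n)
  exact ⟨lr, lb, h1, h2, h3, fun v => (h4 v).mp (List.mem_finRange v)⟩
end

section
/- For every integer r ≥ 1 there exist a natural number n and an r-coloring of the edges of the complete graph K_n such that no collection of at most r − 1 monochromatic paths covers all vertices of K_n; that is, at least r monochromatic paths are needed to cover the vertex set. -/
/-- alternation: if every edge of a chain has an endpoint satisfying `P`, then
the non-`P` count is at most the `P` count plus one. -/
lemma chain_alt {V : Type*} (P : V → Prop) [DecidablePred P] (R : V → V → Prop)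
    (hR : ∀ a b, R a b → P a ∨ P b) :
    ∀ l : List V, l.Chain' R →
      (l.countP (fun v => !decide (P v)) ≤ l.countP (fun v => decide (P v)) + 1) ∧
      (∀ a l', l = a :: l' → P a →
        l.countP (fun v => !decide (P v)) ≤ l.countP (fun v => decide (P v))) := by
  intro l
  induction l with
  | nil => exact fun _ => ⟨by simp, by intro a l' h _; simp at h⟩
  | cons x t ih =>
    intro hch
    have hch' : t.Chain' R := hch.tail
    obtain ⟨ih1, ih2⟩ := ih hch'
    by_cases hx : P x
    · have h2 : ∀ a l', x :: t = a :: l' → P a →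
          (x :: t).countP (fun v => !decide (P v)) ≤ (x :: t).countP (fun v => decide (P v)) := by
        intro a l' heq _
        simp [List.countP_cons, hx]
        omega
      exact ⟨by have := h2 x t rfl hx; omega, h2⟩
    · refine ⟨?_, by intro a l' heq ha; injection heq with h1 h2; exact absurd (h1 ▸ ha) hx⟩
      match t, hch with
      | [], _ => simp [hx]
      | y :: t', hch =>
        have hRxy : R x y := hch.rel_head
        have hy : P y := (hR x y hRxy).resolve_left hx
        have hih := ih2 y t' rfl hy
        have e1 : (x :: y :: t').countP (fun v => !decide (P v))
            = (y :: t').countP (fun v => !decide (P v)) + 1 := by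
          rw [List.countP_cons]; simp [hx]
        have e2 : (x :: y :: t').countP (fun v => decide (P v))
            = (y :: t').countP (fun v => decide (P v)) := by
          rw [List.countP_cons]; simp [hx]
        omega

/-- if every edge of a chain has both endpoints satisfying `Q`, and the chain has
at least 2 vertices, then all vertices satisfy `Q`. -/
lemma chain_all {V : Type*} (Q : V → Prop) (R : V → V → Prop)
    (hR : ∀ a b, R a b → Q a ∧ Q b) :
    ∀ (t : List V) (a : V), (a :: t).Chain' R → t ≠ [] → ∀ v ∈ a :: t, Q v := by
  intro t
  induction t with
  | nil => intro a _ h; exact absurd rfl h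
  | cons b t' ih =>
    intro a hch _ v hv
    have hRab : R a b := hch.rel_head
    rw [List.mem_cons] at hv
    rcases hv with rfl | hv
    · exact (hR v b hRab).1
    · rcases eq_or_ne t' [] with h | h
      · subst h
        simp only [List.mem_singleton] at hv
        subst hv
        exact (hR a v hRab).2
      · exact ih b hch.tail h v hv

lemma card_filter_fin (n : ℕ) (P : ℕ → Prop) [DecidablePred P] :
    (Finset.univ.filter fun v : Fin n => P v.val).card
      = ((Finset.range n).filter P).card := by
  apply Finset.card_bij (fun v _ => v.val)
  · intro a ha
    simp only [Finset.mem_filter, Finset.mem_range]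
    simp only [Finset.mem_filter, Finset.mem_univ, true_and] at ha
    exact ⟨a.isLt, ha⟩
  · intro a _ b _ h; exact Fin.val_injective h
  · intro b hb
    simp only [Finset.mem_filter, Finset.mem_range] at hb
    exact ⟨⟨b, hb.1⟩, by simp [hb.2], rfl⟩

lemma countP_le_card {V : Type*} [Fintype V] [DecidableEq V] (l : List V) (hl : l.Nodup)
    (P : V → Prop) [DecidablePred P] :
    l.countP (fun v => decide (P v)) ≤ (Finset.univ.filter P).card := by
  rw [List.countP_eq_length_filter, ← List.toFinset_card_of_nodup (hl.filter _)]
  apply Finset.card_le_card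
  intro v hv
  rw [List.toFinset_filter] at hv
  simp only [Finset.mem_filter, decide_eq_true_eq] at hv
  simp [hv.2]

/-- For every `r ≥ 1` there is an `r`-colored complete graph `K_n` whose vertex set
cannot be covered by fewer than `r` monochromatic paths. -/
theorem stmt_3 (r : ℕ) (hr : 1 ≤ r) :
    ∃ (n : ℕ) (c : Sym2 (Fin n) → Fin r),
      ¬ ∃ L : List (List (Fin n)),
          L.length ≤ r - 1 ∧
          (∀ l ∈ L, ∃ i : Fin r, IsMonoPath (⊤ : SimpleGraph (Fin n)) c i l) ∧
          ∀ v : Fin n, ∃ l ∈ L, v ∈ l := by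
  rcases eq_or_lt_of_le hr with h1 | h2
  · -- r = 1 : take n = 1, no paths allowed but vertex 0 must be covered
    refine ⟨1, fun _ => ⟨0, hr⟩, ?_⟩
    rintro ⟨L, hlen, -, hcov⟩
    have hL : L = [] := List.length_eq_zero_iff.mp (by omega)
    obtain ⟨l, hl, -⟩ := hcov 0
    rw [hL] at hl
    exact absurd hl List.not_mem_nil
  · -- r ≥ 2
    have hr2 : 2 ≤ r := h2
    set q := r ^ 2 with hqdef
    have hq4 : 4 ≤ q := by
      rw [hqdef]
      nlinarith
    have hq1 : 1 < q := by omega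
    set n := q ^ r - 1 with hndef
    have hn1 : n + 1 = q ^ r := by
      have : 1 ≤ q ^ r := Nat.one_le_pow _ _ (by omega)
      omega
    have hcl : ∀ v : Fin n, Nat.log q (v.val + 1) < r := by
      intro v
      exact Nat.log_lt_of_lt_pow (Nat.succ_ne_zero _) (by omega)
    set f : Fin n → Fin r := fun v => ⟨Nat.log q (v.val + 1), hcl v⟩ with hfdef
    set c : Sym2 (Fin n) → Fin r :=
      Sym2.lift ⟨fun u v => min (f u) (f v), fun u v => min_comm _ _⟩ with hcdef
    have hc : ∀ a b : Fin n, c s(a, b) = min (f a) (f b) := fun a b => rfl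
    refine ⟨n, c, ?_⟩
    rintro ⟨L, hlen, hmono, hcov⟩
    classical
    -- choose a color for each path
    have hFr : (0 : ℕ) < r := hr
    set col : List (Fin n) → Fin r := fun l =>
      if h : ∃ i, IsMonoPath (⊤ : SimpleGraph (Fin n)) c i l then h.choose else ⟨0, hFr⟩
      with hcoldef
    have hcol : ∀ l ∈ L, IsMonoPath (⊤ : SimpleGraph (Fin n)) c (col l) l := by
      intro l hl
      have h := hmono l hl
      simp only [hcoldef, dif_pos h]
      exact h.choose_spec
    -- pigeonhole: some color i is not used
    obtain ⟨i, hi⟩ : ∃ i : Fin r, ∀ l ∈ L, col l ≠ i := by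
      by_contra h
      push_neg at h
      have hsub : Finset.univ ⊆ (L.map col).toFinset := by
        intro i _
        obtain ⟨l, hl, hcl⟩ := h i
        rw [List.mem_toFinset, List.mem_map]
        exact ⟨l, hl, hcl⟩
      have h1 : r ≤ (L.map col).toFinset.card := by
        have := Finset.card_le_card hsub
        simpa using this
      have h2 : (L.map col).toFinset.card ≤ L.length := by
        calc (L.map col).toFinset.card ≤ (L.map col).length := List.toFinset_card_le _
        _ = L.length := List.length_map _
      omega
    -- fiber cardinalities
    have fiber_card : ∀ j : Fin r,
        (Finset.univ.filter fun v : Fin n => f v = j).card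
          = (q ^ (j.val + 1) - 1) - (q ^ j.val - 1) := by
      intro j
      have : (Finset.univ.filter fun v : Fin n => f v = j)
          = (Finset.univ.filter fun v : Fin n => Nat.log q (v.val + 1) = j.val) := by
        ext v
        simp only [Finset.mem_filter, Finset.mem_univ, true_and, Fin.ext_iff]
        exact Iff.rfl
      rw [this, card_filter_fin n (fun m => Nat.log q (m + 1) = j.val)]
      have hIco : ((Finset.range n).filter fun m => Nat.log q (m + 1) = j.val)
          = Finset.Ico (q ^ j.val - 1) (q ^ (j.val + 1) - 1) := by
        ext m
        simp only [Finset.mem_filter, Finset.mem_range, Finset.mem_Ico]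
        rw [Nat.log_eq_iff (Or.inr ⟨hq1, Nat.succ_ne_zero _⟩)]
        have h1 : 1 ≤ q ^ j.val := Nat.one_le_pow _ _ (by omega)
        have h2 : q ^ (j.val + 1) ≤ q ^ r :=
          Nat.pow_le_pow_right (by omega) (by omega)
        omega
      rw [hIco, Nat.card_Ico]
    -- per-path bound on vertices of class i
    have path_bound : ∀ l ∈ L, l.countP (fun v => decide (f v = i)) ≤ q ^ i.val := by
      intro l hl
      obtain ⟨hnd, hch⟩ := hcol l hl
      set j := col l with hjdef
      have hij : j ≠ i := hi l hl
      have hedge : ∀ a b : Fin n, ((⊤ : SimpleGraph (Fin n)).Adj a b ∧ c s(a, b) = j) →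
          min (f a) (f b) = j := by
        intro a b hab; rw [← hc a b]; exact hab.2
      have hqi1 : 1 ≤ q ^ i.val := Nat.one_le_pow _ _ (by omega)
      rcases lt_or_gt_of_ne hij with hji | hij2
      swap
      · -- i < j : all vertices of a path with ≥ 2 vertices have class ≥ j > i
        match l, hch, hnd with
        | [], _, _ => simp
        | [a], _, _ =>
          simp only [List.countP_cons, List.countP_nil]
          split <;> omega
        | a :: b :: t, hch, hnd =>
          have hall : ∀ v ∈ a :: b :: t, j ≤ f v := by
            apply chain_all (fun v => j ≤ f v) _ ?_ (b :: t) a hch (by simp)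
            intro x y hxy
            have := hedge x y hxy
            exact ⟨this ▸ min_le_left _ _, this ▸ min_le_right _ _⟩
          have : (a :: b :: t).countP (fun v => decide (f v = i)) = 0 := by
            rw [List.countP_eq_zero]
            intro v hv
            simp only [decide_eq_true_eq]
            intro hfv
            exact absurd (hfv ▸ hall v hv) (not_le.mpr hij2)
          omega
      · -- j < i : alternation
        have halt := chain_alt (fun v => f v = j) _
          (fun a b hab => by
            have := hedge a b hab
            rcases min_eq_iff.mp this with ⟨h, _⟩ | ⟨h, _⟩
            · exact Or.inl h
            · exact Or.inr h) l hch
        have h1 : l.countP (fun v => decide (f v = i))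
            ≤ l.countP (fun v => !decide (f v = j)) := by
          apply List.countP_mono_left
          intro x _ hx
          simp only [decide_eq_true_eq] at hx
          simp [hx, hij.symm]
        have h2 := halt.1
        beta_reduce at h2
        have h3 : l.countP (fun v => decide (f v = j))
            ≤ (Finset.univ.filter fun v : Fin n => f v = j).card :=
          countP_le_card l hnd _
        rw [fiber_card j] at h3
        have hje : j.val < i.val := hji
        have hpow1 : q ^ (j.val + 1) ≤ q ^ i.val :=
          Nat.pow_le_pow_right (by omega) (by omega)
        have hpow2 : 1 ≤ q ^ j.val := Nat.one_le_pow _ _ (by omega)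
        omega
    -- total count
    have hcover : (Finset.univ.filter fun v : Fin n => f v = i).card
        ≤ L.flatten.countP (fun v => decide (f v = i)) := by
      have hsub : (Finset.univ.filter fun v : Fin n => f v = i)
          ⊆ L.flatten.toFinset.filter (fun v => f v = i) := by
        intro v hv
        simp only [Finset.mem_filter, Finset.mem_univ, true_and] at hv
        simp only [Finset.mem_filter, List.mem_toFinset, List.mem_flatten]
        exact ⟨hcov v, hv⟩
      calc (Finset.univ.filter fun v : Fin n => f v = i).card
          ≤ (L.flatten.toFinset.filter (fun v => f v = i)).card := Finset.card_le_card hsub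
        _ = ((L.flatten.filter (fun v => decide (f v = i))).toFinset).card := by
            rw [List.toFinset_filter]
            congr 1
            ext v
            simp
        _ ≤ (L.flatten.filter (fun v => decide (f v = i))).length := List.toFinset_card_le _
        _ = L.flatten.countP (fun v => decide (f v = i)) :=
            List.countP_eq_length_filter.symm
    have hsum : L.flatten.countP (fun v => decide (f v = i)) ≤ L.length * q ^ i.val := by
      rw [List.countP_flatten]
      calc (L.map (List.countP fun v => decide (f v = i))).sum
          ≤ (L.map (List.countP fun v => decide (f v = i))).length * q ^ i.val := by
            apply List.sum_le_card_nsmul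
            intro x hx
            obtain ⟨l, hl, rfl⟩ := List.mem_map.mp hx
            exact path_bound l hl
        _ = L.length * q ^ i.val := by rw [List.length_map]
    -- contradiction
    have hfib := fiber_card i
    have hpow1 : 1 ≤ q ^ i.val := Nat.one_le_pow _ _ (by omega)
    have hpow2 : q ^ (i.val + 1) = q ^ i.val * q := pow_succ q i.val
    have hbig : q ^ i.val * q ≥ q ^ i.val * 4 :=
      Nat.mul_le_mul_left _ hq4
    have hfinal : q ^ i.val * q - q ^ i.val ≤ (r - 1) * q ^ i.val := by
      have := hcover.trans hsum
      have hr1 : L.length ≤ r - 1 := hlen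
      calc q ^ i.val * q - q ^ i.val = q ^ (i.val + 1) - 1 - (q ^ i.val - 1) := by omega
        _ = (Finset.univ.filter fun v : Fin n => f v = i).card := hfib.symm
        _ ≤ L.length * q ^ i.val := hcover.trans hsum
        _ ≤ (r - 1) * q ^ i.val := Nat.mul_le_mul_right _ hr1
    -- q = r^2, so q - 1 = r^2 - 1 > r - 1
    have : q ^ i.val * (q - 1) ≤ q ^ i.val * (r - 1) := by
      calc q ^ i.val * (q - 1) = q ^ i.val * q - q ^ i.val := by
            rw [Nat.mul_sub_one]
        _ ≤ (r - 1) * q ^ i.val := hfinal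
        _ = q ^ i.val * (r - 1) := Nat.mul_comm _ _
    have hle := Nat.le_of_mul_le_mul_left this (by omega : 0 < q ^ i.val)
    have : r - 1 < q - 1 := by
      have : r < q := by rw [hqdef]; nlinarith
      omega
    omega
end

section
/- For every integer r ≥ 1, every natural number n, and every r-coloring of the edges of the complete graph K_n, the vertex set of K_n can be covered by at most r^4 + r^2 + 1 monochromatic paths (the paths need not be vertex disjoint). -/
set_option maxHeartbeats 800000

namespace PathCoverProof

open Finset

variable {n r : ℕ}

def Rel (c : Sym2 (Fin n) → Fin r) (s : Fin r) (a b : Fin n) : Prop :=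
  a ≠ b ∧ c s(a, b) = s

def Nbr (c : Sym2 (Fin n) → Fin r) (s : Fin r) (w : Fin n) : Finset (Fin n) :=
  Finset.univ.filter fun v => v ≠ w ∧ c s(v, w) = s

lemma mem_Nbr {c : Sym2 (Fin n) → Fin r} {s : Fin r} {w v : Fin n} :
    v ∈ Nbr c s w ↔ v ≠ w ∧ c s(v, w) = s := by
  simp [Nbr]

lemma rel_of_mem_Nbr {c : Sym2 (Fin n) → Fin r} {s : Fin r} {w v : Fin n}
    (h : v ∈ Nbr c s w) : Rel c s w v := by
  rw [mem_Nbr] at h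
  exact ⟨Ne.symm h.1, by rw [Sym2.eq_swap]; exact h.2⟩

lemma rel_symm {c : Sym2 (Fin n) → Fin r} {s : Fin r} {a b : Fin n}
    (h : Rel c s a b) : Rel c s b a :=
  ⟨h.1.symm, by rw [Sym2.eq_swap]; exact h.2⟩

/-- Greedy extension of a single monochromatic path through fresh hubs. -/
lemma build (c : Sym2 (Fin n) → Fin r) (s : Fin r) :
    ∀ (m : ℕ) (C : Finset (Fin n)) (e : Fin n) (p : List (Fin n)),
      (e :: p).Nodup → (e :: p).Chain' (Rel c s) → (∀ x ∈ C, x ∉ (e :: p)) →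
      ∃ (e' : Fin n) (p' : List (Fin n)) (C' : Finset (Fin n)) (μ : ℕ),
        C' ⊆ C ∧ (e' :: p').Nodup ∧ (e' :: p').Chain' (Rel c s) ∧
        (μ = m ∨ ∀ w' ∈ C', Nbr c s e' ∩ Nbr c s w' ⊆ (e' :: p').toFinset) ∧
        (∀ x ∈ (e :: p), x ∈ (e' :: p')) ∧
        (∀ x ∈ C, x ∉ C' → x ∈ (e' :: p')) ∧
        (∀ x ∈ C', x ∉ (e' :: p')) ∧
        C'.card + μ ≤ C.card ∧
        (e' :: p').length ≤ (e :: p).length + 2 * μ ∧ μ ≤ m ∧ (e' = e ∨ e' ∈ C) := by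
  intro m
  induction m with
  | zero =>
    intro C e p hnd hch hdis
    exact ⟨e, p, C, 0, Finset.Subset.rfl, hnd, hch, Or.inl rfl, fun x h => h,
      fun x hx h' => absurd hx h', hdis, by omega, by omega, le_refl _, Or.inl rfl⟩
  | succ m ih =>
    intro C e p hnd hch hdis
    by_cases H : ∃ w' ∈ C, ∃ h, h ∈ Nbr c s e ∩ Nbr c s w' ∧ h ∉ (e :: p)
    · obtain ⟨w', hw'C, h, hhmem, hhp⟩ := H
      rw [Finset.mem_inter] at hhmem
      obtain ⟨hhe, hhw⟩ := hhmem
      have hrel_eh : Rel c s e h := rel_of_mem_Nbr hhe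
      have hrel_wh : Rel c s w' h := rel_of_mem_Nbr hhw
      have hw'p : w' ∉ (e :: p) := hdis w' hw'C
      have hw'h : w' ≠ h := hrel_wh.1
      have hnd2 : (w' :: h :: e :: p).Nodup := by
        rw [List.nodup_cons, List.nodup_cons]
        refine ⟨?_, hhp, hnd⟩
        intro hmem
        rcases List.mem_cons.mp hmem with h1 | h1
        · exact hw'h h1
        · exact hw'p h1
      have hch2 : (w' :: h :: e :: p).Chain' (Rel c s) := by
        rw [List.Chain', List.isChain_cons_cons, List.isChain_cons_cons]
        exact ⟨hrel_wh, rel_symm hrel_eh, hch⟩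
      have hdis2 : ∀ x ∈ (C.erase w').erase h, x ∉ (w' :: h :: e :: p) := by
        intro x hx
        have hxh : x ≠ h := (Finset.mem_erase.mp hx).1
        have hxw : x ≠ w' := (Finset.mem_erase.mp (Finset.mem_erase.mp hx).2).1
        have hxC : x ∈ C := (Finset.mem_erase.mp (Finset.mem_erase.mp hx).2).2
        intro hmem
        rcases List.mem_cons.mp hmem with h1 | h1
        · exact hxw h1
        rcases List.mem_cons.mp h1 with h2 | h2
        · exact hxh h2
        · exact hdis x hxC h2
      obtain ⟨e', p', C', μ, hsub, hnd', hch', hflag, hpres, hcov, hdisj, hcard, hlen, hμ, horig⟩ :=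
        ih ((C.erase w').erase h) w' (h :: e :: p) hnd2 hch2 hdis2
      have hsubC : (C.erase w').erase h ⊆ C :=
        (Finset.erase_subset _ _).trans (Finset.erase_subset _ _)
      refine ⟨e', p', C', μ + 1, hsub.trans hsubC, hnd', hch', ?_, ?_, ?_, hdisj, ?_, ?_, by omega, ?_⟩
      · rcases hflag with h1 | h1
        · exact Or.inl (by omega)
        · exact Or.inr h1
      · intro x hx
        exact hpres x (List.mem_cons_of_mem _ (List.mem_cons_of_mem _ hx))
      · intro x hxC hxC'
        by_cases hxw : x = w'
        · exact hpres x (by simp [hxw])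
        by_cases hxh : x = h
        · exact hpres x (by simp [hxh])
        · exact hcov x (Finset.mem_erase.mpr ⟨hxh, Finset.mem_erase.mpr ⟨hxw, hxC⟩⟩) hxC'
      · have h1 : ((C.erase w').erase h).card ≤ (C.erase w').card := Finset.card_erase_le
        have h2 : (C.erase w').card + 1 = C.card := Finset.card_erase_add_one hw'C
        omega
      · have := hlen
        simp only [List.length_cons] at this ⊢
        omega
      · rcases horig with h1 | h1
        · exact Or.inr (h1 ▸ hw'C)
        · exact Or.inr (hsubC h1)
    · push_neg at H
      refine ⟨e, p, C, 0, Finset.Subset.rfl, hnd, hch, Or.inr ?_, fun x h => h,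
        fun x hx h' => absurd hx h', hdis, by omega, by omega, by omega, Or.inl rfl⟩
      intro w' hw' x hx
      exact List.mem_toFinset.mpr (H w' hw' x hx)


/-- Cover a "class" `C` (all of whose (r+1)-subsets contain a pair with many common
color-`s` neighbours) by few monochromatic color-`s` paths. -/
lemma core (c : Sym2 (Fin n) → Fin r) (s : Fin r) (j : ℕ) (hj : 0 < j) :
    ∀ (B : ℕ) (k : ℕ) (C : Finset (Fin n)), C.card ≤ B →
      (∀ T : Finset (Fin n), T ⊆ C → T.card = k + 1 →
        ∃ a ∈ T, ∃ b ∈ T, a ≠ b ∧ 2 * j ≤ (Nbr c s a ∩ Nbr c s b).card) →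
      ∃ L : List (List (Fin n)),
        (∀ l ∈ L, l.Nodup ∧ l.Chain' (Rel c s)) ∧
        (∀ w ∈ C, ∃ l ∈ L, w ∈ l) ∧ L.length ≤ C.card / j + k := by
  intro B
  induction B with
  | zero =>
    intro k C hC _
    have hCe : C = ∅ := Finset.card_eq_zero.mp (Nat.le_zero.mp hC)
    subst hCe
    exact ⟨[], by simp, by simp, by simp⟩
  | succ B ih =>
    intro k C hC hyp
    rcases C.eq_empty_or_nonempty with rfl | ⟨w, hw⟩
    · exact ⟨[], by simp, by simp, by simp⟩
    have hdis0 : ∀ x ∈ C.erase w, x ∉ ([w] : List (Fin n)) := by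
      intro x hx hmem
      exact (Finset.mem_erase.mp hx).1 (List.mem_singleton.mp hmem)
    obtain ⟨e', p', C', μ, hsub, hnd, hch, hflag, hpres, hcov, hdisj, hcard, hlen, hμ, horig⟩ :=
      build c s (j - 1) (C.erase w) w [] (by simp) (List.isChain_singleton w) hdis0
    have hC'C : C' ⊆ C := hsub.trans (Finset.erase_subset _ _)
    have hwq : w ∈ (e' :: p') := hpres w (by simp)
    have hcard1 : (C.erase w).card + 1 = C.card := Finset.card_erase_add_one hw
    by_cases hfull : μ = j - 1
    · have hCj : C'.card + j ≤ C.card := by omega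
      obtain ⟨L', hm', hc', hl'⟩ := ih k C' (by omega) (fun T hT => hyp T (hT.trans hC'C))
      refine ⟨(e' :: p') :: L', ?_, ?_, ?_⟩
      · intro l hl
        rcases List.mem_cons.mp hl with rfl | hl
        · exact ⟨hnd, hch⟩
        · exact hm' l hl
      · intro x hx
        by_cases hxC' : x ∈ C'
        · obtain ⟨l, hl, hxl⟩ := hc' x hxC'
          exact ⟨l, List.mem_cons_of_mem _ hl, hxl⟩
        by_cases hxw : x = w
        · exact ⟨e' :: p', List.mem_cons_self, hxw ▸ hwq⟩
        · exact ⟨e' :: p', List.mem_cons_self,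
            hcov x (Finset.mem_erase.mpr ⟨hxw, hx⟩) hxC'⟩
      · have key : C'.card / j + 1 ≤ C.card / j := by
          have h1 : (C'.card + j) / j = C'.card / j + 1 := Nat.add_div_right _ hj
          have h2 : (C'.card + j) / j ≤ C.card / j := Nat.div_le_div_right hCj
          omega
        simp only [List.length_cons]
        omega
    · have hstuck : ∀ w' ∈ C', Nbr c s e' ∩ Nbr c s w' ⊆ (e' :: p').toFinset := by
        rcases hflag with h1 | h1
        · exact absurd h1 hfull
        · exact h1
      have hlow : ∀ w' ∈ C', (Nbr c s e' ∩ Nbr c s w').card < 2 * j := by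
        intro w' hw'
        have h1 : (Nbr c s e' ∩ Nbr c s w').card ≤ (e' :: p').toFinset.card :=
          Finset.card_le_card (hstuck w' hw')
        have h2 : (e' :: p').toFinset.card ≤ (e' :: p').length := (e' :: p').toFinset_card_le
        have h3 : (e' :: p').length ≤ 1 + 2 * μ := by simpa using hlen
        omega
      have he'C : e' ∈ C := by
        rcases horig with h1 | h1
        · exact h1 ▸ hw
        · exact (Finset.erase_subset _ _) h1
      have he'C' : e' ∉ C' := fun h => hdisj e' h (List.mem_cons_self)
      cases k with
      | zero =>
        exfalso
        obtain ⟨a, ha, b, hb, hab, _⟩ := hyp {e'} (by simpa using he'C) (by simp)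
        rw [Finset.mem_singleton] at ha hb
        exact hab (ha.trans hb.symm)
      | succ k' =>
        have hyp' : ∀ T : Finset (Fin n), T ⊆ C' → T.card = k' + 1 →
            ∃ a ∈ T, ∃ b ∈ T, a ≠ b ∧ 2 * j ≤ (Nbr c s a ∩ Nbr c s b).card := by
          intro T hT hTcard
          have he'T : e' ∉ T := fun h => he'C' (hT h)
          obtain ⟨a, ha, b, hb, hab, hcard2⟩ := hyp (insert e' T)
            (Finset.insert_subset he'C (hT.trans hC'C))
            (by rw [Finset.card_insert_of_notMem he'T, hTcard])
          rcases Finset.mem_insert.mp ha with rfl | haT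
          · rcases Finset.mem_insert.mp hb with rfl | hbT
            · exact absurd rfl hab
            · exfalso
              have := hlow b (hT hbT)
              omega
          · rcases Finset.mem_insert.mp hb with rfl | hbT
            · exfalso
              have := hlow a (hT haT)
              rw [Finset.inter_comm] at this
              omega
            · exact ⟨a, haT, b, hbT, hab, hcard2⟩
        have hcardC' : C'.card < C.card := by omega
        obtain ⟨L', hm', hc', hl'⟩ := ih k' C' (by omega) hyp'
        refine ⟨(e' :: p') :: L', ?_, ?_, ?_⟩
        · intro l hl
          rcases List.mem_cons.mp hl with rfl | hl
          · exact ⟨hnd, hch⟩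
          · exact hm' l hl
        · intro x hx
          by_cases hxC' : x ∈ C'
          · obtain ⟨l, hl, hxl⟩ := hc' x hxC'
            exact ⟨l, List.mem_cons_of_mem _ hl, hxl⟩
          by_cases hxw : x = w
          · exact ⟨e' :: p', List.mem_cons_self, hxw ▸ hwq⟩
          · exact ⟨e' :: p', List.mem_cons_self,
              hcov x (Finset.mem_erase.mpr ⟨hxw, hx⟩) hxC'⟩
        · have key : C'.card / j ≤ C.card / j :=
            Nat.div_le_div_right (Finset.card_le_card hC'C)
          simp only [List.length_cons]
          omega


/-- Bonferroni-type inequality. -/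
lemma bonf (A : Fin n → Finset (Fin n)) (m : ℕ) :
    ∀ (T : Finset (Fin n)), (∀ a ∈ T, ∀ b ∈ T, a ≠ b → (A a ∩ A b).card ≤ m) →
      ∑ w ∈ T, (A w).card ≤ (T.biUnion A).card + (T.card).choose 2 * m := by
  intro T
  induction T using Finset.induction_on with
  | empty => simp
  | @insert a T ha ih =>
    intro hpair
    have hT : ∀ x ∈ T, ∀ y ∈ T, x ≠ y → (A x ∩ A y).card ≤ m := fun x hx y hy =>
      hpair x (Finset.mem_insert_of_mem hx) y (Finset.mem_insert_of_mem hy)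
    have h1 : (A a ∩ T.biUnion A).card ≤ T.card * m := by
      have hsub : A a ∩ T.biUnion A ⊆ T.biUnion (fun b => A a ∩ A b) := by
        intro x hx
        rw [Finset.mem_inter, Finset.mem_biUnion] at hx
        obtain ⟨hxa, b, hb, hxb⟩ := hx
        exact Finset.mem_biUnion.mpr ⟨b, hb, Finset.mem_inter.mpr ⟨hxa, hxb⟩⟩
      calc (A a ∩ T.biUnion A).card ≤ (T.biUnion (fun b => A a ∩ A b)).card :=
            Finset.card_le_card hsub
        _ ≤ ∑ b ∈ T, (A a ∩ A b).card := Finset.card_biUnion_le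
        _ ≤ ∑ _b ∈ T, m := Finset.sum_le_sum (fun b hb =>
            hpair a (Finset.mem_insert_self _ _) b (Finset.mem_insert_of_mem hb)
              (fun h => ha (h ▸ hb)))
        _ = T.card * m := by rw [Finset.sum_const, smul_eq_mul]
    have h2 : (A a).card + (T.biUnion A).card
        = ((insert a T).biUnion A).card + (A a ∩ T.biUnion A).card := by
      rw [Finset.biUnion_insert]
      exact (Finset.card_union_add_card_inter _ _).symm
    have hih := ih hT
    have hch : ((insert a T).card).choose 2 = (T.card).choose 2 + T.card := by
      rw [Finset.card_insert_of_notMem ha]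
      have h3 := Nat.choose_succ_succ T.card 1
      simp only [Nat.choose_one_right] at h3
      norm_num at h3
      omega
    rw [Finset.sum_insert ha, hch]
    nlinarith [h1, h2, hih]

/-- the color neighborhoods at `w` partition everything else -/
lemma sum_nbr_card (c : Sym2 (Fin n) → Fin r) (hr : 0 < r) (w : Fin n) :
    ∑ s : Fin r, (Nbr c s w).card = n - 1 := by
  have hdisj : ∀ x ∈ (Finset.univ : Finset (Fin r)), ∀ y ∈ Finset.univ, x ≠ y →
      Disjoint (Nbr c x w) (Nbr c y w) := by
    intro x _ y _ hxy
    rw [Finset.disjoint_left]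
    intro v hvx hvy
    rw [mem_Nbr] at hvx hvy
    exact hxy (hvx.2 ▸ hvy.2)
  have hU : (Finset.univ : Finset (Fin r)).biUnion (fun s => Nbr c s w)
      = Finset.univ.erase w := by
    ext v
    simp only [Finset.mem_biUnion, Finset.mem_univ, true_and, mem_Nbr, Finset.mem_erase,
      and_true]
    constructor
    · rintro ⟨s, hs⟩
      exact hs.1
    · intro hne
      exact ⟨c s(v, w), hne, rfl⟩
  rw [← Finset.card_biUnion hdisj, hU, Finset.card_erase_of_mem (Finset.mem_univ w),
    Finset.card_univ, Fintype.card_fin]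


/-- All the numerical facts we need about the parameters. -/
lemma arith_all (r n : ℕ) (hr : 2 ≤ r) (hn : r ^ 4 + r ^ 2 + 2 ≤ n) :
    ∃ S j : ℕ,
      (r + 1) * ((n - 2) / r + 1) = n + S ∧
      0 < j ∧
      n + 1 ≤ (r ^ 4 + 2) * j ∧
      r * (r + 1) * (2 * j - 1) + 2 ≤ 2 * S := by
  have h0 : 0 < r := by omega
  have hn2 : 2 ≤ n := le_trans (Nat.le_add_left 2 _) hn
  have hr4 : r ≤ r ^ 4 := Nat.le_self_pow (by norm_num) r
  have hrn : r + 2 ≤ n := by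
    have h1 : (0:ℕ) ≤ r ^ 2 := Nat.zero_le _
    linarith
  set y := (n - 2) / r with hy_def
  have hdm : r * y + (n - 2) % r = n - 2 := Nat.div_add_mod _ _
  have hm : (n - 2) % r < r := Nat.mod_lt _ h0
  have hsub2 : n - 2 + 2 = n := by omega
  have e1 : r * (y + 1) = r * y + r := by ring
  have hy1 : 1 ≤ y := by
    rw [hy_def, Nat.one_le_div_iff h0]; omega
  have hrD_low : n ≤ r * (y + 1) + 1 := by linarith
  have hSex : n + 1 ≤ (r + 1) * (y + 1) := by
    have e2 : (r + 1) * (y + 1) = r * (y + 1) + y + 1 := by ring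
    linarith
  obtain ⟨S, hS⟩ : ∃ S, (r + 1) * (y + 1) = n + S :=
    ⟨(r + 1) * (y + 1) - n, (Nat.add_sub_cancel' (by linarith)).symm⟩
  have hrS : n ≤ r * S + r + 1 := by
    have e3 : r * ((r + 1) * (y + 1)) = r * n + r * S := by rw [hS]; ring
    have e4 : r * ((r + 1) * (y + 1)) = (r + 1) * (r * (y + 1)) := by ring
    have e5 : (r + 1) * n ≤ (r + 1) * (r * (y + 1) + 1) := Nat.mul_le_mul_left _ hrD_low
    have e6 : (r + 1) * (r * (y + 1) + 1) = (r + 1) * (r * (y + 1)) + r + 1 := by ring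
    have e7 : (r + 1) * n = r * n + n := by ring
    linarith
  have hS2 : r * r + r + 2 ≤ 2 * S := by
    have h8 : r * (r * r + r + 2) ≤ r * (2 * S) := by nlinarith [hrS, hn, hr]
    exact Nat.le_of_mul_le_mul_left h8 h0
  obtain ⟨Q, hQ⟩ : ∃ Q, r * r + r = Q := ⟨_, rfl⟩
  have hQ6 : 6 ≤ Q := by nlinarith [hQ, hr]
  have hS2' : Q + 2 ≤ 2 * S := by rw [← hQ]; exact hS2
  have hQpos : 0 < 2 * Q := by omega
  obtain ⟨j, hj⟩ : ∃ j, (2 * S + (Q - 2)) / (2 * Q) = j := ⟨_, rfl⟩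
  have hjdm0 : 2 * Q * ((2 * S + (Q - 2)) / (2 * Q)) + (2 * S + (Q - 2)) % (2 * Q)
      = 2 * S + (Q - 2) := Nat.div_add_mod _ _
  obtain ⟨MO2, hMO2⟩ : ∃ m, (2 * S + (Q - 2)) % (2 * Q) = m := ⟨_, rfl⟩
  have hjm : MO2 < 2 * Q := hMO2 ▸ Nat.mod_lt _ hQpos
  obtain ⟨W, hW⟩ : ∃ W, Q * j = W := ⟨_, rfl⟩
  have hjdm : 2 * W + MO2 = 2 * S + (Q - 2) := by
    have e10 : 2 * Q * j = 2 * W := by rw [← hW]; ring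
    rw [hj, hMO2, e10] at hjdm0
    exact hjdm0
  have hj1 : 0 < j := by
    rw [← hj]
    exact Nat.div_pos (by omega) hQpos
  have e8 : 2 * j - 1 + 1 = 2 * j := by omega
  have e9 : Q * (2 * j - 1) + Q = 2 * W := by
    have e11 : Q * (2 * j - 1) + Q = Q * ((2 * j - 1) + 1) := by ring
    rw [e11, e8, ← hW]; ring
  have hiii : r * (r + 1) * (2 * j - 1) + 2 ≤ 2 * S := by
    have eQ : r * (r + 1) = Q := by rw [← hQ]; ring
    rw [eQ]
    -- Q*(2j-1) + 2 ≤ 2S  from e9, hjdm, hQ6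
    have : Q * (2 * j - 1) + Q + MO2 = 2 * S + (Q - 2) := by rw [e9]; exact hjdm
    omega
  refine ⟨S, j, hS, hj1, ?_, hiii⟩
  -- main inequality  n + 1 ≤ (r^4+2)*j
  rcases Nat.lt_or_ge r 3 with hr3 | hr3
  · -- r = 2
    have hr2 : r = 2 := by omega
    subst hr2
    have hQ2 : Q = 6 := by omega
    subst hQ2
    norm_num at hn ⊢
    -- atoms : y, S, j, W, MO2, n ; all relations linear
    have hW6 : 6 * j = W := hW
    have hS3 : 3 * (y + 1) = n + S := hS
    omega
  · -- r ≥ 3 : work over ℤ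
    have hkeyN : 2 * S ≤ 2 * W + Q + 1 := by omega
    have hQZ : (Q : ℤ) = (r : ℤ) ^ 2 + r := by
      have := hQ
      push_cast [← this]
      ring
    have hWZ : (W : ℤ) = (Q : ℤ) * j := by exact_mod_cast hW.symm
    have hr3Z : (3 : ℤ) ≤ (r : ℤ) := by exact_mod_cast hr3
    have hnZ : ((r : ℤ) ^ 4 + r ^ 2 + 2) ≤ (n : ℤ) := by exact_mod_cast hn
    have hkeyZ : 2 * (S : ℤ) ≤ 2 * W + Q + 1 := by exact_mod_cast hkeyN
    have hrSZ : (n : ℤ) ≤ r * S + r + 1 := by exact_mod_cast hrS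
    have hrpos : (0 : ℤ) < r := by linarith
    have c1 : (r : ℤ) * (2 * S) ≤ r * (2 * W + Q + 1) :=
      mul_le_mul_of_nonneg_left hkeyZ (by linarith)
    have t3 : 2 * (n : ℤ) ≤ 2 * r * W + r * Q + 3 * r + 2 := by linarith [c1, hrSZ]
    have hposfac : (0 : ℤ) < 2 * (r : ℤ) ^ 3 + 2 * r ^ 2 := by positivity
    have e21 : (2 * (r : ℤ) ^ 3 + 2 * r ^ 2) * (((r : ℤ) ^ 4 + 2) * j)
        = ((r : ℤ) ^ 4 + 2) * (2 * r * ((Q : ℤ) * j)) := by rw [hQZ]; ring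
    -- power chain
    have hq : ∀ k : ℕ, 3 * (r : ℤ) ^ k ≤ r ^ (k + 1) := by
      intro k
      calc 3 * (r : ℤ) ^ k = (r : ℤ) ^ k * 3 := by ring
        _ ≤ (r : ℤ) ^ k * r := mul_le_mul_of_nonneg_left hr3Z (by positivity)
        _ = r ^ (k + 1) := by ring
    have q1 : 3 * (r : ℤ) ^ 1 ≤ r ^ 2 := hq 1
    have q2 : 3 * (r : ℤ) ^ 2 ≤ r ^ 3 := hq 2
    have q3 : 3 * (r : ℤ) ^ 3 ≤ r ^ 4 := hq 3
    have q4 : 3 * (r : ℤ) ^ 4 ≤ r ^ 5 := hq 4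
    have q5 : 3 * (r : ℤ) ^ 5 ≤ r ^ 6 := hq 5
    have q6 : 3 * (r : ℤ) ^ 6 ≤ r ^ 7 := hq 6
    have q7 : 3 * (r : ℤ) ^ 7 ≤ r ^ 8 := hq 7
    have hslopefac : (0 : ℤ) ≤ 2 * (r : ℤ) ^ 4 - 2 * r ^ 3 - 2 * r ^ 2 + 4 := by
      linarith only [q3, q2, sq_nonneg (r : ℤ)]
    have hs1 : (0 : ℤ) ≤ ((n : ℤ) - ((r : ℤ) ^ 4 + r ^ 2 + 2)) *
        (2 * (r : ℤ) ^ 4 - 2 * r ^ 3 - 2 * r ^ 2 + 4) :=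
      mul_nonneg (by linarith) hslopefac
    have hfin : (2 * (r : ℤ) ^ 3 + 2 * r ^ 2) * ((n : ℤ) + 1)
        ≤ (2 * (r : ℤ) ^ 3 + 2 * r ^ 2) * (((r : ℤ) ^ 4 + 2) * j) := by
      rw [e21, ← hWZ]
      have erq : (r : ℤ) * Q = r ^ 3 + r ^ 2 := by rw [hQZ]; ring
      have t3' : 2 * (n : ℤ) ≤ 2 * r * W + (r ^ 3 + r ^ 2) + 3 * r + 2 := by linarith [t3]
      have t4 : (0 : ℤ) ≤ (r : ℤ) ^ 4 + 2 := by positivity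
      have t5 : ((r : ℤ) ^ 4 + 2) * (2 * (n : ℤ))
          ≤ ((r : ℤ) ^ 4 + 2) * (2 * r * W + (r ^ 3 + r ^ 2) + 3 * r + 2) :=
        mul_le_mul_of_nonneg_left t3' t4
      linarith only [t5, hs1, q1, q2, q3, q4, q5, q6, q7, hr3Z]
    have : ((n : ℤ) + 1) ≤ ((r : ℤ) ^ 4 + 2) * j := le_of_mul_le_mul_left hfin hposfac
    exact_mod_cast this


end PathCoverProof

open PathCoverProof

/-- The vertex set of every `r`-colored complete graph `K_n` can be covered by at most
`r⁴ + r² + 1` monochromatic paths (not necessarily vertex disjoint). -/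
theorem stmt_4 (r : ℕ) (hr : 1 ≤ r) (n : ℕ) (c : Sym2 (Fin n) → Fin r) :
    ∃ L : List (List (Fin n)),
      L.length ≤ r ^ 4 + r ^ 2 + 1 ∧
      (∀ l ∈ L, ∃ i : Fin r, IsMonoPath (⊤ : SimpleGraph (Fin n)) c i l) ∧
      ∀ v : Fin n, ∃ l ∈ L, v ∈ l := by
  classical
  rcases le_or_gt n (r ^ 4 + r ^ 2 + 1) with hsmall | hbig
  · -- trivial singleton cover
    refine ⟨(List.finRange n).map (fun v => [v]), by simpa using hsmall, ?_, ?_⟩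
    · intro l hl
      obtain ⟨v, -, rfl⟩ := List.mem_map.mp hl
      exact ⟨⟨0, hr⟩, by simp [IsMonoPath, List.Chain']⟩
    · intro v
      exact ⟨[v], List.mem_map.mpr ⟨v, List.mem_finRange v, rfl⟩, by simp⟩
  · rcases eq_or_lt_of_le hr with hr1 | hr2
    · -- one color : a single Hamiltonian path works
      obtain rfl := hr1.symm
      refine ⟨[List.finRange n], by norm_num, ?_, ?_⟩
      · intro l hl
        rw [List.mem_singleton] at hl
        subst hl
        refine ⟨0, List.nodup_finRange n, ?_⟩
        have hp : (List.finRange n).Pairwise (· ≠ ·) := List.nodup_finRange n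
        refine List.IsChain.imp ?_ hp.isChain
        intro a b hab
        exact ⟨by simpa [SimpleGraph.top_adj] using hab, Subsingleton.elim _ _⟩
      · intro v
        exact ⟨List.finRange n, List.mem_singleton_self _, List.mem_finRange v⟩
    · -- main case
      have hr2' : 2 ≤ r := hr2
      have hn2 : r ^ 4 + r ^ 2 + 2 ≤ n := by linarith
      have h0 : 0 < r := by omega
      have hnn2 : 2 ≤ n := le_trans (Nat.le_add_left 2 _) hn2
      obtain ⟨S, j, hS, hj1, hii, hiii⟩ := arith_all r n hr2' hn2
      -- pigeonhole : a majority color at every vertex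
      have hpig : ∀ w : Fin n, ∃ s : Fin r, (n - 2) / r + 1 ≤ (Nbr c s w).card := by
        intro w
        by_contra hcon
        push_neg at hcon
        have hsum := sum_nbr_card c h0 w
        have hle : ∑ s : Fin r, (Nbr c s w).card ≤ ∑ _s : Fin r, (n - 2) / r :=
          Finset.sum_le_sum (fun s _ => by have := hcon s; omega)
        rw [Finset.sum_const, Finset.card_univ, Fintype.card_fin, smul_eq_mul] at hle
        have hdiv : r * ((n - 2) / r) ≤ n - 2 := Nat.mul_div_le _ _
        have e1 : n - 1 + 1 = n := by omega
        have e2 : n - 2 + 2 = n := by omega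
        linarith [hsum, hle, hdiv]
      choose σ hσ using hpig
      -- no r+1 vertices of a class have pairwise few common neighbours
      have hanti : ∀ s : Fin r, ∀ T : Finset (Fin n),
          T ⊆ Finset.univ.filter (fun w => σ w = s) → T.card = r + 1 →
          ∃ a ∈ T, ∃ b ∈ T, a ≠ b ∧ 2 * j ≤ (Nbr c s a ∩ Nbr c s b).card := by
        intro s T hT hTcard
        by_contra hcon
        push_neg at hcon
        have hb := bonf (Nbr c s) (2 * j - 1) T
          (fun a ha b hb' hab => by have := hcon a ha b hb' hab; omega)
        have hdeg : ∀ w ∈ T, (n - 2) / r + 1 ≤ (Nbr c s w).card := by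
          intro w hw
          have hws : σ w = s := (Finset.mem_filter.mp (hT hw)).2
          have h := hσ w
          rwa [hws] at h
        have hlower : T.card * ((n - 2) / r + 1) ≤ ∑ w ∈ T, (Nbr c s w).card := by
          calc T.card * ((n - 2) / r + 1) = ∑ _w ∈ T, ((n - 2) / r + 1) := by
                rw [Finset.sum_const, smul_eq_mul]
            _ ≤ ∑ w ∈ T, (Nbr c s w).card := Finset.sum_le_sum hdeg
        have hUb : (T.biUnion (Nbr c s)).card ≤ n := by
          calc (T.biUnion (Nbr c s)).card ≤ (Finset.univ : Finset (Fin n)).card :=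
                Finset.card_le_univ _
            _ = n := by rw [Finset.card_univ, Fintype.card_fin]
        have hch2 : 2 * ((r + 1).choose 2) = r * (r + 1) := by
          have hdvd : 2 ∣ (r + 1) * r := by
            have h := Nat.even_mul_succ_self r
            rw [mul_comm] at h
            exact h.two_dvd
          rw [Nat.choose_two_right]
          simp only [Nat.add_sub_cancel]
          rw [Nat.mul_div_cancel' hdvd]
          ring
        rw [hTcard] at hb hlower
        have e3 : 2 * ((r + 1).choose 2 * (2 * j - 1)) = r * (r + 1) * (2 * j - 1) := by
          rw [← hch2]; ring
        linarith [hb, hlower, hS, hiii, hUb, e3]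
      -- cover each class
      have hcover : ∀ s : Fin r, ∃ L : List (List (Fin n)),
          (∀ l ∈ L, l.Nodup ∧ l.Chain' (Rel c s)) ∧
          (∀ w ∈ Finset.univ.filter (fun w => σ w = s), ∃ l ∈ L, w ∈ l) ∧
          L.length ≤ (Finset.univ.filter (fun w => σ w = s)).card / j + r :=
        fun s => core c s j hj1 _ r _ le_rfl (hanti s)
      choose F hF using hcover
      refine ⟨(List.finRange r).flatMap F, ?_, ?_, ?_⟩
      · -- length
        have hlen : ((List.finRange r).flatMap F).length = ∑ s : Fin r, (F s).length := by
          rw [List.length_flatMap, Fin.sum_univ_def]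
        rw [hlen]
        have h2 : ∑ s : Fin r, (Finset.univ.filter (fun w => σ w = s)).card = n := by
          have h := Finset.card_eq_sum_card_fiberwise
            (f := σ) (s := Finset.univ) (t := Finset.univ) (fun x _ => Finset.mem_univ _)
          rw [Finset.card_univ, Fintype.card_fin] at h
          exact h.symm
        have h1 : ∑ s : Fin r, (Finset.univ.filter (fun w => σ w = s)).card / j
            ≤ (∑ s : Fin r, (Finset.univ.filter (fun w => σ w = s)).card) / j := by
          rw [Nat.le_div_iff_mul_le hj1, Finset.sum_mul]
          exact Finset.sum_le_sum (fun s _ => Nat.div_mul_le_self _ _)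
        have hnj : n / j ≤ r ^ 4 + 1 := by
          have hlt : n < (r ^ 4 + 2) * j := by omega
          have := Nat.div_lt_of_lt_mul (by rwa [mul_comm] at hlt)
          omega
        calc ∑ s : Fin r, (F s).length
            ≤ ∑ s : Fin r, ((Finset.univ.filter (fun w => σ w = s)).card / j + r) :=
              Finset.sum_le_sum (fun s _ => (hF s).2.2)
          _ = (∑ s : Fin r, (Finset.univ.filter (fun w => σ w = s)).card / j) + r * r := by
              rw [Finset.sum_add_distrib, Finset.sum_const, Finset.card_univ,
                Fintype.card_fin, smul_eq_mul]
          _ ≤ n / j + r * r := by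
              have := le_trans h1 (le_of_eq (by rw [h2]))
              omega
          _ ≤ (r ^ 4 + 1) + r * r := by omega
          _ = r ^ 4 + r ^ 2 + 1 := by ring
      · -- monochromatic
        intro l hl
        obtain ⟨s, -, hl⟩ := List.mem_flatMap.mp hl
        obtain ⟨hnd, hch⟩ := (hF s).1 l hl
        refine ⟨s, hnd, ?_⟩
        refine List.IsChain.imp ?_ hch
        intro a b hab
        exact ⟨by simpa [SimpleGraph.top_adj] using hab.1, hab.2⟩
      · -- covering
        intro v
        obtain ⟨l, hl, hvl⟩ := (hF (σ v)).2.1 v (by simp)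
        exact ⟨l, List.mem_flatMap.mpr ⟨σ v, List.mem_finRange _, hl⟩, hvl⟩
end
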